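/- Let x̄ be an m×m doubly stochastic matrix and ȳ an n×n doubly stochastic matrix, and define F(x,y) = Σ_{i,j,k,ℓ} q(i,j,k,ℓ)·x(i,j)·y(k,ℓ) + Σ_{i,j} c(i,j)·x(i,j) + Σ_{k,ℓ} d(k,ℓ)·y(k,ℓ). Then there exist permutation matrices x* (m×m) and y* (n×n) such that F(x*,y*) ≤ F(x̄,ȳ). -/

import Mathlib

/-- A linear functional on doubly stochastic matrices is minimized (among the value at the
given matrix) at some permutation matrix. -/
lemma key_perm_min {m : ℕ} (A : Fin m → Fin m → ℝ) (xb : Fin m → Fin m → ℝ)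
    (h0 : ∀ i j, 0 ≤ xb i j) (hr : ∀ i, (∑ j, xb i j) = 1)
    (hc : ∀ j, (∑ i, xb i j) = 1) :
    ∃ σ : Equiv.Perm (Fin m),
      (∑ i, ∑ j, A i j * (if σ i = j then (1:ℝ) else 0)) ≤ ∑ i, ∑ j, A i j * xb i j := by
  have hM : (Matrix.of xb) ∈ doublyStochastic ℝ (Fin m) := by
    rw [mem_doublyStochastic_iff_sum]
    exact ⟨h0, hr, hc⟩
  obtain ⟨w, hw0, hw1, hwM⟩ := exists_eq_sum_perm_of_mem_doublyStochastic hM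
  set g : Equiv.Perm (Fin m) → ℝ := fun σ => ∑ i, A i (σ i) with hg
  have hsimp : ∀ σ : Equiv.Perm (Fin m),
      (∑ i, ∑ j, A i j * (if σ i = j then (1:ℝ) else 0)) = g σ := by
    intro σ
    refine Finset.sum_congr rfl fun i _ => ?_
    simp [mul_ite]
  have hxb : ∀ i j, xb i j = ∑ σ : Equiv.Perm (Fin m), w σ * (if σ i = j then (1:ℝ) else 0) := by
    intro i j
    calc xb i j = (∑ σ : Equiv.Perm (Fin m), w σ • σ.permMatrix ℝ) i j := by rw [hwM]; rfl
      _ = ∑ σ : Equiv.Perm (Fin m), w σ * (if σ i = j then (1:ℝ) else 0) := by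
          rw [Matrix.sum_apply]
          refine Finset.sum_congr rfl fun σ _ => ?_
          simp [Equiv.Perm.permMatrix, PEquiv.toMatrix_apply, Equiv.toPEquiv_apply,
            smul_eq_mul]
  have hterm : ∀ i j, A i j * xb i j
      = ∑ σ : Equiv.Perm (Fin m), w σ * (A i j * (if σ i = j then (1:ℝ) else 0)) := by
    intro i j
    rw [hxb, Finset.mul_sum]
    exact Finset.sum_congr rfl fun σ _ => by ring
  have hval : (∑ i, ∑ j, A i j * xb i j) = ∑ σ : Equiv.Perm (Fin m), w σ * g σ := by
    simp only [hterm]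
    calc (∑ i, ∑ j, ∑ σ : Equiv.Perm (Fin m),
            w σ * (A i j * (if σ i = j then (1:ℝ) else 0)))
        = ∑ i, ∑ σ : Equiv.Perm (Fin m), ∑ j,
            w σ * (A i j * (if σ i = j then (1:ℝ) else 0)) :=
          Finset.sum_congr rfl fun i _ => Finset.sum_comm
      _ = ∑ σ : Equiv.Perm (Fin m), ∑ i, ∑ j,
            w σ * (A i j * (if σ i = j then (1:ℝ) else 0)) := Finset.sum_comm
      _ = ∑ σ : Equiv.Perm (Fin m), w σ * g σ := by
          refine Finset.sum_congr rfl fun σ _ => ?_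
          rw [hg, Finset.mul_sum]
          refine Finset.sum_congr rfl fun i _ => ?_
          simp [mul_ite]
  obtain ⟨σ0, _, hσ0⟩ := Finset.exists_min_image Finset.univ g ⟨1, Finset.mem_univ 1⟩
  refine ⟨σ0, ?_⟩
  rw [hsimp, hval]
  calc g σ0 = ∑ σ : Equiv.Perm (Fin m), w σ * g σ0 := by
        rw [← Finset.sum_mul, hw1, one_mul]
    _ ≤ ∑ σ : Equiv.Perm (Fin m), w σ * g σ :=
        Finset.sum_le_sum fun σ _ => mul_le_mul_of_nonneg_left (hσ0 σ (Finset.mem_univ σ)) (hw0 σ)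

theorem stmt_13 (m n : ℕ)
    (q : Fin m → Fin m → Fin n → Fin n → ℝ)
    (c : Fin m → Fin m → ℝ) (d : Fin n → Fin n → ℝ)
    (F : (Fin m → Fin m → ℝ) → (Fin n → Fin n → ℝ) → ℝ)
    (hF : ∀ x y, F x y =
      (∑ i, ∑ j, ∑ k, ∑ l, q i j k l * x i j * y k l)
      + (∑ i, ∑ j, c i j * x i j) + (∑ k, ∑ l, d k l * y k l))
    (xb : Fin m → Fin m → ℝ) (yb : Fin n → Fin n → ℝ)
    (hx_nonneg : ∀ i j, 0 ≤ xb i j)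
    (hx_row : ∀ i, (∑ j, xb i j) = 1) (hx_col : ∀ j, (∑ i, xb i j) = 1)
    (hy_nonneg : ∀ k l, 0 ≤ yb k l)
    (hy_row : ∀ k, (∑ l, yb k l) = 1) (hy_col : ∀ l, (∑ k, yb k l) = 1) :
    ∃ (σ : Equiv.Perm (Fin m)) (π : Equiv.Perm (Fin n)),
      F (fun i j => if σ i = j then 1 else 0) (fun k l => if π k = l then 1 else 0)
        ≤ F xb yb := by
  -- F as a linear functional in x for fixed y
  have hFx : ∀ x y, F x y =
      (∑ i, ∑ j, ((∑ k, ∑ l, q i j k l * y k l) + c i j) * x i j)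
        + (∑ k, ∑ l, d k l * y k l) := by
    intro x y
    rw [hF]
    have h1 : ∀ i j, ((∑ k, ∑ l, q i j k l * y k l) + c i j) * x i j
        = (∑ k, ∑ l, q i j k l * x i j * y k l) + c i j * x i j := by
      intro i j
      rw [add_mul, Finset.sum_mul]
      congr 1
      refine Finset.sum_congr rfl fun k _ => ?_
      rw [Finset.sum_mul]
      exact Finset.sum_congr rfl fun l _ => by ring
    simp only [h1, Finset.sum_add_distrib]
  -- F as a linear functional in y for fixed x
  have hFy : ∀ x y, F x y =
      (∑ k, ∑ l, ((∑ i, ∑ j, q i j k l * x i j) + d k l) * y k l)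
        + (∑ i, ∑ j, c i j * x i j) := by
    intro x y
    rw [hF]
    have h2 : ∀ k l, ((∑ i, ∑ j, q i j k l * x i j) + d k l) * y k l
        = (∑ i, ∑ j, q i j k l * x i j * y k l) + d k l * y k l := by
      intro k l
      rw [add_mul, Finset.sum_mul]
      congr 1
      exact Finset.sum_congr rfl fun i _ => Finset.sum_mul ..
    simp only [h2, Finset.sum_add_distrib]
    have hswap : (∑ k, ∑ l, ∑ i, ∑ j, q i j k l * x i j * y k l)
        = ∑ i, ∑ j, ∑ k, ∑ l, q i j k l * x i j * y k l := by
      calc (∑ k, ∑ l, ∑ i, ∑ j, q i j k l * x i j * y k l)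
          = ∑ k, ∑ i, ∑ l, ∑ j, q i j k l * x i j * y k l :=
            Finset.sum_congr rfl fun k _ => Finset.sum_comm
        _ = ∑ i, ∑ k, ∑ l, ∑ j, q i j k l * x i j * y k l := Finset.sum_comm
        _ = ∑ i, ∑ k, ∑ j, ∑ l, q i j k l * x i j * y k l :=
            Finset.sum_congr rfl fun i _ =>
              Finset.sum_congr rfl fun k _ => Finset.sum_comm
        _ = ∑ i, ∑ j, ∑ k, ∑ l, q i j k l * x i j * y k l :=
            Finset.sum_congr rfl fun i _ => Finset.sum_comm
    rw [hswap]
    ring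
  obtain ⟨σ, hσ⟩ := key_perm_min (fun i j => (∑ k, ∑ l, q i j k l * yb k l) + c i j)
    xb hx_nonneg hx_row hx_col
  obtain ⟨π, hπ⟩ := key_perm_min
    (fun k l => (∑ i, ∑ j, q i j k l * (if σ i = j then (1:ℝ) else 0)) + d k l)
    yb hy_nonneg hy_row hy_col
  refine ⟨σ, π, ?_⟩
  calc F (fun i j => if σ i = j then (1:ℝ) else 0) (fun k l => if π k = l then (1:ℝ) else 0)
      ≤ F (fun i j => if σ i = j then (1:ℝ) else 0) yb := by
        rw [hFy, hFy]
        exact add_le_add hπ le_rfl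
    _ ≤ F xb yb := by
        rw [hFx, hFx]
        exact add_le_add hσ le_rfl
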